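/- Let (K_i, Y_i)_{i∈ℕ} be the i.i.d. process above. Then almost every realization stabilizes: there exists i_0 such that (1) for all i ≥ i_0, max{K_1,…,K_i} > i, and (2) every record-time i ≥ i_0 is simple and has Y_i = 'blue'. -/

import Mathlib

open MeasureTheory ENNReal ProbabilityTheory


lemma aux_exp_neg (x : ℝ) (hx : 0 < x) : Real.exp (-x) ≤ 27 / x ^ 3 := by
  have h1 : (x/3) ^ 3 ≤ Real.exp x := by
    calc (x/3)^3 ≤ (x/3 + 1)^3 := by apply pow_le_pow_left₀ (by positivity); linarith
    _ ≤ (Real.exp (x/3))^3 := by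
          apply pow_le_pow_left₀ (by positivity); linarith [Real.add_one_le_exp (x/3)]
    _ = Real.exp x := by rw [← Real.exp_nat_mul]; push_cast; ring_nf
  have h2 : x^3/27 ≤ Real.exp x := by nlinarith [h1]
  have h3 : 0 < x^3/27 := by positivity
  rw [Real.exp_neg]
  calc (Real.exp x)⁻¹ ≤ (x^3/27)⁻¹ := by
        apply inv_anti₀ h3 h2
    _ = 27 / x^3 := by field_simp
  
lemma aux_pow_le {t r : ℝ} (ht : 0 < t) (h0 : 0 ≤ r) (hr : r ≤ 1 - t)
    (n : ℕ) (hn : 1 ≤ n) : r ^ n ≤ 27 / (t * n) ^ 3 := by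
  have h1 : r ≤ Real.exp (-t) := le_trans hr (by linarith [Real.add_one_le_exp (-t)])
  have hn' : (0:ℝ) < n := by exact_mod_cast hn
  calc r ^ n ≤ (Real.exp (-t)) ^ n := pow_le_pow_left₀ h0 h1 n
    _ = Real.exp (-(t * n)) := by rw [← Real.exp_nat_mul]; ring_nf
    _ ≤ 27 / (t * n) ^ 3 := aux_exp_neg _ (by positivity)

-- geometric sums
lemma aux_geom1 {r : ℝ} (h0 : 0 ≤ r) (h1 : r < 1) : ∑' n : ℕ, r ^ n = (1 - r)⁻¹ :=
  tsum_geometric_of_lt_one h0 h1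

lemma aux_geom2 {r : ℝ} (h0 : 0 ≤ r) (h1 : r < 1) :
    ∑' n : ℕ, ((n : ℝ) + 1) * r ^ n ≤ ((1 - r)⁻¹) ^ 2 := by
  have hr' : ‖r‖ < 1 := by rw [Real.norm_eq_abs, abs_of_nonneg h0]; exact h1
  have hs1 : Summable (fun n : ℕ => (n : ℝ) * r ^ n) := by
    have := summable_pow_mul_geometric_of_norm_lt_one 1 hr'
    simpa using this
  have hs2 : Summable (fun n : ℕ => r ^ n) := summable_geometric_of_lt_one h0 h1
  have : ∑' n : ℕ, ((n : ℝ) + 1) * r ^ n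
      = (∑' n : ℕ, (n : ℝ) * r ^ n) + ∑' n : ℕ, r ^ n := by
    rw [← Summable.tsum_add hs1 hs2]
    congr 1; ext n; ring
  rw [this, tsum_coe_mul_geometric_of_norm_lt_one hr', tsum_geometric_of_lt_one h0 h1]
  have h2 : 0 < 1 - r := by linarith
  have : r / (1-r)^2 + (1-r)⁻¹ = ((1-r)⁻¹)^2 := by field_simp; ring
  rw [this]


private lemma aux_tail (x ct : ℝ) (hx : 1 ≤ x) (hct : 1 ≤ ct) :
    (4*ct)⁻¹ * x^(-(1/4:ℝ)) ≤ x * (ct⁻¹ * (2*x)^(-(5/4:ℝ))) := by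
  have hx0 : (0:ℝ) < x := by linarith
  have hct0 : (0:ℝ) < ct := by linarith
  have h2 : (2*x)^(-(5/4:ℝ)) = (2:ℝ)^(-(5/4:ℝ)) * x^(-(5/4:ℝ)) :=
    Real.mul_rpow (by norm_num) (le_of_lt hx0)
  have h3 : (1/4 : ℝ) ≤ (2:ℝ)^(-(5/4:ℝ)) := by
    have : (2:ℝ)^(-2:ℝ) ≤ (2:ℝ)^(-(5/4:ℝ)) :=
      Real.rpow_le_rpow_of_exponent_le (by norm_num) (by norm_num)
    have h4 : (2:ℝ)^(-2:ℝ) = 1/4 := by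
      rw [show (-2:ℝ) = ((-2:ℤ):ℝ) by norm_num, Real.rpow_intCast]; norm_num
    linarith
  have h5 : x * x^(-(5/4:ℝ)) = x^(-(1/4:ℝ)) := by
    rw [← Real.rpow_one_add' (le_of_lt hx0) (by norm_num)]; norm_num
  have h6 : (0:ℝ) < x^(-(5/4:ℝ)) := Real.rpow_pos_of_pos hx0 _
  have h7 : (0:ℝ) < x^(-(1/4:ℝ)) := Real.rpow_pos_of_pos hx0 _
  calc (4*ct)⁻¹ * x^(-(1/4:ℝ)) = ct⁻¹ * (1/4) * (x * x^(-(5/4:ℝ))) := by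
        rw [h5, mul_inv]; ring
    _ ≤ ct⁻¹ * (2:ℝ)^(-(5/4:ℝ)) * (x * x^(-(5/4:ℝ))) := by
        apply mul_le_mul_of_nonneg_right _ (by positivity)
        apply mul_le_mul_of_nonneg_left h3 (by positivity)
    _ = x * (ct⁻¹ * (2*x)^(-(5/4:ℝ))) := by rw [h2]; ring

private lemma aux_einv (aR x : ℝ) (ha : 0 < aR) (hx : 1 ≤ x) :
    (aR * x^(-(1/4:ℝ)))⁻¹ ≤ aR⁻¹ * x := by
  have hx0 : (0:ℝ) < x := by linarith
  have h1 : x⁻¹ ≤ x^(-(1/4:ℝ)) := by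
    rw [← Real.rpow_neg_one]
    exact Real.rpow_le_rpow_of_exponent_le hx (by norm_num)
  have h2 : (0:ℝ) < x⁻¹ := by positivity
  rw [mul_inv]
  apply mul_le_mul_of_nonneg_left _ (by positivity)
  calc (x^(-(1/4:ℝ)))⁻¹ ≤ (x⁻¹)⁻¹ := inv_anti₀ h2 h1
    _ = x := inv_inv x

private lemma aux_geom2_summable {r : ℝ} (h0 : 0 ≤ r) (h1 : r < 1) :
    Summable (fun n : ℕ => ((n : ℝ) + 1) * r ^ n) := by
  have hr' : ‖r‖ < 1 := by rw [Real.norm_eq_abs, abs_of_nonneg h0]; exact h1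
  have hs1 : Summable (fun n : ℕ => (n : ℝ) * r ^ n) := by
    have := summable_pow_mul_geometric_of_norm_lt_one 1 hr'
    simpa using this
  have hs2 : Summable (fun n : ℕ => r ^ n) := summable_geometric_of_lt_one h0 h1
  apply Summable.congr (hs1.add hs2)
  intro n; ring

private lemma aux_B (aR : ℝ) (ha : 0 < aR) (ha4 : aR ≤ 1/4) (i : ℕ) (hi : 1 ≤ i) :
    (1 - aR * ((i+1:ℕ):ℝ)^(-(1/4:ℝ)))^i ≤ (216 * aR⁻¹^3) / ((i:ℝ)+1)^2 := by
  set x : ℝ := ((i+1:ℕ):ℝ) with hx_def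
  have hx1 : (1:ℝ) ≤ x := by rw [hx_def]; exact_mod_cast Nat.le_add_left 1 i
  have hx0 : (0:ℝ) < x := by linarith
  set t : ℝ := aR * x^(-(1/4:ℝ)) with ht_def
  have hxr : (0:ℝ) < x^(-(1/4:ℝ)) := Real.rpow_pos_of_pos hx0 _
  have hxr1 : x^(-(1/4:ℝ)) ≤ 1 := Real.rpow_le_one_of_one_le_of_nonpos hx1 (by norm_num)
  have ht0 : 0 < t := by rw [ht_def]; positivity
  have ht4 : t ≤ 1/4 := by
    rw [ht_def]
    calc aR * x^(-(1/4:ℝ)) ≤ aR * 1 := by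
          apply mul_le_mul_of_nonneg_left hxr1 (le_of_lt ha)
      _ ≤ 1/4 := by linarith
  have step1 : (1 - t)^i ≤ 27 / (t * i)^3 :=
    aux_pow_le ht0 (by linarith) (le_refl _) i hi
  have hi' : (1:ℝ) ≤ (i:ℝ) := by exact_mod_cast hi
  -- (t*i)^3 ≥ aR^3 * (i+1)^2 / 8
  have key : aR^3 * ((i:ℝ)+1)^2 / 8 ≤ (t * i)^3 := by
    have h34 : x⁻¹ ≤ x^(-(3/4:ℝ)) := by
      rw [show x⁻¹ = x^(-1:ℝ) by rw [Real.rpow_neg_one]]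
      exact Real.rpow_le_rpow_of_exponent_le hx1 (by norm_num)
    have hpow : (x^(-(1/4:ℝ)))^3 = x^(-(3/4:ℝ)) := by
      rw [← Real.rpow_natCast (x^(-(1/4:ℝ))) 3, ← Real.rpow_mul (le_of_lt hx0)]
      norm_num
    have hcube : ((i:ℝ)+1)^3 ≤ 8 * (i:ℝ)^3 := by
      have h2i : (i:ℝ)+1 ≤ 2*(i:ℝ) := by linarith
      calc ((i:ℝ)+1)^3 ≤ (2*(i:ℝ))^3 := pow_le_pow_left₀ (by positivity) h2i 3
        _ = 8 * (i:ℝ)^3 := by ring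
    have hxi : x = (i:ℝ) + 1 := by rw [hx_def]; push_cast; ring
    calc aR^3 * ((i:ℝ)+1)^2 / 8
        = aR^3 * (((i:ℝ)+1)^3 / 8) * ((i:ℝ)+1)⁻¹ := by
          field_simp
      _ ≤ aR^3 * (i:ℝ)^3 * ((i:ℝ)+1)⁻¹ := by
          apply mul_le_mul_of_nonneg_right _ (by positivity)
          apply mul_le_mul_of_nonneg_left _ (by positivity)
          linarith
      _ = aR^3 * (i:ℝ)^3 * x⁻¹ := by rw [hxi]
      _ ≤ aR^3 * (i:ℝ)^3 * x^(-(3/4:ℝ)) := by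
          apply mul_le_mul_of_nonneg_left h34 (by positivity)
      _ = (t * i)^3 := by rw [ht_def, ← hpow]; ring
  calc (1 - t)^i ≤ 27 / (t * i)^3 := step1
    _ ≤ 27 / (aR^3 * ((i:ℝ)+1)^2 / 8) := by
        apply div_le_div_of_nonneg_left (by norm_num) (by positivity) key
    _ = (216 * aR⁻¹^3) / ((i:ℝ)+1)^2 := by
        field_simp
        ring


private lemma aux_einvsq (aR x : ℝ) (ha : 0 < aR) (hx : 1 ≤ x) :
    ((aR * x^(-(1/4:ℝ)))⁻¹)^2 = aR⁻¹^2 * x^((1/2:ℝ)) := by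
  have hx0 : (0:ℝ) < x := by linarith
  rw [Real.rpow_neg (le_of_lt hx0), mul_inv, inv_inv, mul_pow,
    ← Real.rpow_natCast (x ^ ((1/4:ℝ))) 2, ← Real.rpow_mul (le_of_lt hx0)]
  norm_num

private lemma aux_C_term (x : ℝ) (hx : 1 ≤ x) :
    x^(-(5/4:ℝ)) * x^(-(5/4:ℝ)) * (x+1)^((1/2:ℝ)) ≤ 2 * x^(-(2:ℝ)) := by
  have hx0 : (0:ℝ) < x := by linarith
  have h1 : (x+1)^((1/2:ℝ)) ≤ 2 * x^((1/2:ℝ)) := by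
    calc (x+1)^((1/2:ℝ)) ≤ (2*x)^((1/2:ℝ)) :=
          Real.rpow_le_rpow (by linarith) (by linarith) (by norm_num)
      _ = (2:ℝ)^((1/2:ℝ)) * x^((1/2:ℝ)) := Real.mul_rpow (by norm_num) (le_of_lt hx0)
      _ ≤ 2 * x^((1/2:ℝ)) := by
          apply mul_le_mul_of_nonneg_right _ (by positivity)
          calc (2:ℝ)^((1/2:ℝ)) ≤ (2:ℝ)^(1:ℝ) :=
                Real.rpow_le_rpow_of_exponent_le (by norm_num) (by norm_num)
            _ = 2 := Real.rpow_one 2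
  have h2 : x^(-(5/4:ℝ)) * x^(-(5/4:ℝ)) * x^((1/2:ℝ)) = x^(-(2:ℝ)) := by
    rw [← Real.rpow_add hx0, ← Real.rpow_add hx0]
    norm_num
  calc x^(-(5/4:ℝ)) * x^(-(5/4:ℝ)) * (x+1)^((1/2:ℝ))
      ≤ x^(-(5/4:ℝ)) * x^(-(5/4:ℝ)) * (2 * x^((1/2:ℝ))) := by
        apply mul_le_mul_of_nonneg_left h1 (by positivity)
    _ = 2 * (x^(-(5/4:ℝ)) * x^(-(5/4:ℝ)) * x^((1/2:ℝ))) := by ring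
    _ = 2 * x^(-(2:ℝ)) := by rw [h2]

private lemma aux_tail' (m : ℕ) (ct : ℝ) (hct : 1 ≤ ct) :
    (4*ct)⁻¹ * ((m+1:ℕ):ℝ)^(-(1/4:ℝ)) ≤ ((m+1:ℕ):ℝ) * (ct⁻¹ * ((2*(m+1):ℕ):ℝ)^(-(5/4:ℝ))) := by
  have h2 : ((2*(m+1):ℕ):ℝ) = 2 * ((m+1:ℕ):ℝ) := by push_cast; ring
  rw [h2]
  exact aux_tail _ ct (by exact_mod_cast Nat.le_add_left 1 m) hct

set_option maxHeartbeats 2000000 in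
/-- For the i.i.d. sequence of pairs `(K i, Y i)` where `P(K i = k) = (1/c) k^(-5/4)`
on the positive integers and, conditionally on `K i = k`, `Y i = red` (encoded `true`)
with probability `2^(-k)`, almost every realization stabilizes: there is `i₀` such that (1) for all `i ≥ i₀`
the running maximum `max {K 0, …, K (i-1)}` exceeds `i`, and (2) every record-time
`i ≥ i₀` is simple and has `Y i = blue` (encoded `false`). -/
theorem stmt_5 {Ω : Type*} [MeasurableSpace Ω] (μ : Measure Ω) [IsProbabilityMeasure μ]
    (c : ℝ≥0∞) (hc : c = ∑' j : ℕ, ((j + 1 : ℕ) : ℝ≥0∞) ^ (-(5/4 : ℝ)))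
    (K : ℕ → Ω → ℕ) (Y : ℕ → Ω → Bool)
    (hmeas : ∀ i, Measurable (fun ω => (K i ω, Y i ω)))
    (hindep : iIndepFun (fun i ω => (K i ω, Y i ω)) μ)
    (hpos : ∀ i, ∀ᵐ ω ∂μ, 1 ≤ K i ω)
    (hlaw : ∀ i k, μ {ω | K i ω = k + 1} = c⁻¹ * ((k + 1 : ℕ) : ℝ≥0∞) ^ (-(5/4 : ℝ)))
    (hred : ∀ i k, μ {ω | K i ω = k + 1 ∧ Y i ω = true}
      = 2⁻¹ ^ (k + 1) * μ {ω | K i ω = k + 1}) :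
    ∀ᵐ ω ∂μ, ∃ i₀ : ℕ,
      (∀ i ≥ i₀, i < (Finset.range i).sup (fun j => K j ω)) ∧
      (∀ i ≥ i₀, (∀ j < i, K j ω ≤ K i ω) →
        (∀ j < i, K j ω < K i ω) ∧ Y i ω = false) := by
  classical
  have hKmeas : ∀ i, Measurable (K i) := fun i => measurable_fst.comp (hmeas i)
  have hprod : ∀ (S : Finset ℕ) (A : ℕ → Set (ℕ × Bool)),
      μ (⋂ j ∈ S, (fun ω => (K j ω, Y j ω)) ⁻¹' A j)
        = ∏ j ∈ S, μ ((fun ω => (K j ω, Y j ω)) ⁻¹' A j) := by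
    intro S A
    exact hindep.meas_biInter (fun i _ => ⟨A i, (Set.to_countable (A i)).measurableSet, rfl⟩)
  -- summability of the real p-series
  have hsum54 : Summable (fun j : ℕ => ((j + 1 : ℕ) : ℝ) ^ (-(5/4 : ℝ))) := by
    have h := Real.summable_nat_rpow.mpr (by norm_num : -(5/4 : ℝ) < -1)
    have := (summable_nat_add_iff 1).mpr h
    simpa using this
  have hterm : ∀ j : ℕ, ((j + 1 : ℕ) : ℝ≥0∞) ^ (-(5/4 : ℝ))
      = ENNReal.ofReal (((j + 1 : ℕ) : ℝ) ^ (-(5/4 : ℝ))) := by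
    intro j
    have hb : ((j + 1 : ℕ) : ℝ≥0∞) = ENNReal.ofReal ((j + 1 : ℕ) : ℝ) := by
      simp [ENNReal.ofReal_add, ENNReal.ofReal_natCast]
    rw [hb, ENNReal.ofReal_rpow_of_pos (by positivity)]
  have hcfin : c ≠ ∞ := by
    rw [hc]
    have : ∑' j : ℕ, ((j + 1 : ℕ) : ℝ≥0∞) ^ (-(5/4 : ℝ))
        = ENNReal.ofReal (∑' j : ℕ, ((j + 1 : ℕ) : ℝ) ^ (-(5/4 : ℝ))) := by
      rw [ENNReal.ofReal_tsum_of_nonneg (fun j => by positivity) hsum54]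
      exact tsum_congr hterm
    rw [this]; exact ENNReal.ofReal_ne_top
  have hc1 : 1 ≤ c := by
    rw [hc]
    calc (1:ℝ≥0∞) = ((0 + 1 : ℕ) : ℝ≥0∞) ^ (-(5/4 : ℝ)) := by simp
    _ ≤ _ := ENNReal.le_tsum 0
  set ct : ℝ := c.toReal with hct_def
  have hct1 : (1:ℝ) ≤ ct := by
    rw [hct_def, ← ENNReal.toReal_one]
    exact ENNReal.toReal_mono hcfin hc1
  have hct0 : (0:ℝ) < ct := by linarith
  set p : ℕ → ℝ≥0∞ := fun k => c⁻¹ * ((k + 1 : ℕ) : ℝ≥0∞) ^ (-(5/4 : ℝ)) with hp_def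
  have hpreal : ∀ k : ℕ, p k = ENNReal.ofReal (ct⁻¹ * ((k + 1 : ℕ) : ℝ) ^ (-(5/4 : ℝ))) := by
    intro k
    rw [hp_def, ENNReal.ofReal_mul (by positivity), ← hterm k]
    congr 1
    rw [ENNReal.ofReal_inv_of_pos hct0, ENNReal.ofReal_toReal hcfin]
  set T : ℕ → ℝ≥0∞ := fun m => ∑' k : ℕ, p (m + k) with hT_def
  have hT : ∀ i m, μ {ω | m + 1 ≤ K i ω} = T m := by
    intro i m
    have hU : {ω | m + 1 ≤ K i ω} = ⋃ k : ℕ, {ω | K i ω = (m + k) + 1} := by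
      ext ω
      simp only [Set.mem_setOf_eq, Set.mem_iUnion]
      constructor
      · intro h; exact ⟨K i ω - m - 1, by omega⟩
      · rintro ⟨k, hk⟩; omega
    rw [hU, measure_iUnion]
    · exact tsum_congr fun k => hlaw i (m + k)
    · intro a b hab
      simp only [Function.onFun]
      apply Set.disjoint_left.mpr
      intro ω ha hb
      simp only [Set.mem_setOf_eq] at ha hb
      omega
    · intro k
      exact (hKmeas i) (measurableSet_singleton _)
  have hTle1 : ∀ m, T m ≤ 1 := fun m => (hT 0 m) ▸ prob_le_one
  have hTne : ∀ m, T m ≠ ∞ := fun m => ne_top_of_le_ne_top one_ne_top (hTle1 m)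
  have hFm : ∀ i m, μ {ω | K i ω ≤ m} = 1 - T m := by
    intro i m
    have hcompl : {ω | K i ω ≤ m} = {ω | m + 1 ≤ K i ω}ᶜ := by
      ext ω; simp only [Set.mem_setOf_eq, Set.mem_compl_iff]; omega
    have hms : MeasurableSet {ω | m + 1 ≤ K i ω} := hKmeas i measurableSet_Ici
    rw [hcompl, prob_compl_eq_one_sub hms, hT]
  -- the real tail lower bound
  set a : ℝ := (4 * ct)⁻¹ with ha_def
  have ha0 : 0 < a := by rw [ha_def]; positivity
  have ha4 : a ≤ 1/4 := by
    rw [ha_def]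
    rw [inv_le_comm₀ (by positivity) (by norm_num)]
    linarith
  set e : ℕ → ℝ := fun m => a * ((m + 1 : ℕ) : ℝ) ^ (-(1/4:ℝ)) with he_def
  have he0 : ∀ m, 0 < e m := by
    intro m; rw [he_def]; positivity
  have he4 : ∀ m, e m ≤ 1/4 := by
    intro m
    calc a * ((m + 1 : ℕ) : ℝ) ^ (-(1/4:ℝ)) ≤ a * 1 := by
          apply mul_le_mul_of_nonneg_left _ (le_of_lt ha0)
          apply Real.rpow_le_one_of_one_le_of_nonpos (by exact_mod_cast Nat.le_add_left 1 m) (by norm_num)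
      _ = a := mul_one a
      _ ≤ 1/4 := ha4
  have hTlow : ∀ m, ENNReal.ofReal (e m) ≤ T m := by
    intro m
    have step1 : ∑ k ∈ Finset.range (m+1), p (m + k) ≤ T m := ENNReal.sum_le_tsum _
    have step2 : ∀ k ∈ Finset.range (m+1),
        ENNReal.ofReal (ct⁻¹ * ((2 * (m+1) : ℕ) : ℝ) ^ (-(5/4 : ℝ))) ≤ p (m + k) := by
      intro k hk
      rw [hpreal]
      apply ENNReal.ofReal_le_ofReal
      apply mul_le_mul_of_nonneg_left _ (by positivity)
      apply Real.rpow_le_rpow_of_nonpos (by positivity) _ (by norm_num)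
      have : m + k + 1 ≤ 2 * (m + 1) := by
        simp only [Finset.mem_range] at hk; omega
      exact_mod_cast this
    calc ENNReal.ofReal (e m)
        ≤ ENNReal.ofReal (((m+1 : ℕ) : ℝ) * (ct⁻¹ * ((2 * (m+1) : ℕ) : ℝ) ^ (-(5/4 : ℝ)))) := by
          apply ENNReal.ofReal_le_ofReal
          exact aux_tail' m ct hct1
      _ = ∑ k ∈ Finset.range (m+1), ENNReal.ofReal (ct⁻¹ * ((2 * (m+1) : ℕ) : ℝ) ^ (-(5/4 : ℝ))) := by
          rw [Finset.sum_const, Finset.card_range, nsmul_eq_mul,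
            ← ENNReal.ofReal_natCast (m+1), ← ENNReal.ofReal_mul (by positivity)]
      _ ≤ ∑ k ∈ Finset.range (m+1), p (m + k) := Finset.sum_le_sum step2
      _ ≤ T m := step1
  have hFmle : ∀ m, 1 - T m ≤ ENNReal.ofReal (1 - e m) := by
    intro m
    rw [ENNReal.ofReal_sub _ (le_of_lt (he0 m)), ENNReal.ofReal_one]
    exact tsub_le_tsub_left (hTlow m) 1
  -- the B sets
  set B : ℕ → Set Ω := fun i => {ω | (Finset.range i).sup (fun j => K j ω) ≤ i} with hB_def
  have hBmeasure : ∀ i, μ (B i) = (1 - T i) ^ i := by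
    intro i
    have hBi : B i = ⋂ j ∈ Finset.range i, (fun ω => (K j ω, Y j ω)) ⁻¹' {q : ℕ × Bool | q.1 ≤ i} := by
      ext ω
      simp [hB_def, Finset.sup_le_iff]
    rw [hBi, hprod]
    have heach : ∀ j ∈ Finset.range i,
        μ ((fun ω => (K j ω, Y j ω)) ⁻¹' {q : ℕ × Bool | q.1 ≤ i}) = 1 - T i := by
      intro j _
      have : ((fun ω => (K j ω, Y j ω)) ⁻¹' {q : ℕ × Bool | q.1 ≤ i}) = {ω | K j ω ≤ i} := rfl
      rw [this, hFm]
    rw [Finset.prod_congr rfl heach, Finset.prod_const, Finset.card_range]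
  have hBbound : ∀ i, μ (B i) ≤ ENNReal.ofReal ((1 - e i) ^ i) := by
    intro i
    rw [hBmeasure, ENNReal.ofReal_pow (by linarith [he4 i])]
    exact pow_le_pow_left' (hFmle i) i
  set CB : ℝ := 216 * a⁻¹^3 + 1 with hCB_def
  have hCB1 : (1:ℝ) ≤ CB := by
    have : (0:ℝ) < a⁻¹^3 := by positivity
    rw [hCB_def]; nlinarith
  have hgBsum : Summable (fun i : ℕ => CB / ((i:ℝ)+1)^2) := by
    have h2 : Summable (fun i : ℕ => ((i:ℝ)+1)⁻¹^2) := by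
      have := (summable_nat_add_iff 1).mpr (Real.summable_one_div_nat_pow.mpr (by norm_num : 1 < 2))
      apply this.congr
      intro i
      push_cast
      rw [inv_pow]
      ring
    apply Summable.congr (h2.mul_left CB)
    intro i
    rw [inv_pow]
    rw [div_eq_mul_inv]
  have hBterm : ∀ i, μ (B i) ≤ ENNReal.ofReal (CB / ((i:ℝ)+1)^2) := by
    intro i
    rcases Nat.eq_zero_or_pos i with h0 | h1
    · subst h0
      calc μ (B 0) ≤ 1 := prob_le_one
        _ ≤ ENNReal.ofReal (CB / (((0:ℕ):ℝ)+1)^2) := by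
            rw [ENNReal.one_le_ofReal]
            push_cast
            norm_num
            linarith
    · refine le_trans (hBbound i) (ENNReal.ofReal_le_ofReal ?_)
      calc (1 - e i)^i ≤ (216 * a⁻¹^3) / ((i:ℝ)+1)^2 := aux_B a ha0 ha4 i h1
        _ ≤ CB / ((i:ℝ)+1)^2 := by
            gcongr
            rw [hCB_def]; linarith
  have hBsum : ∑' i, μ (B i) ≠ ∞ := by
    apply ne_top_of_le_ne_top _ (ENNReal.tsum_le_tsum hBterm)
    rw [← ENNReal.ofReal_tsum_of_nonneg (fun i => by positivity) hgBsum]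
    exact ENNReal.ofReal_ne_top
  -- geometric bounds
  have hx01 : ∀ m, 0 ≤ 1 - e m := fun m => by linarith [he4 m]
  have hx11 : ∀ m, 1 - e m < 1 := fun m => by linarith [he0 m]
  have hpowle : ∀ m n, (1 - T m) ^ n ≤ ENNReal.ofReal ((1 - e m) ^ n) := by
    intro m n
    rw [ENNReal.ofReal_pow (hx01 m)]
    exact pow_le_pow_left' (hFmle m) n
  have hgeo : ∀ m, ∑' n : ℕ, (1 - T m) ^ n ≤ ENNReal.ofReal ((e m)⁻¹) := by
    intro m
    calc ∑' n : ℕ, (1 - T m) ^ n ≤ ∑' n : ℕ, ENNReal.ofReal ((1 - e m) ^ n) :=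
          ENNReal.tsum_le_tsum fun n => hpowle m n
      _ = ENNReal.ofReal (∑' n : ℕ, (1 - e m) ^ n) :=
          (ENNReal.ofReal_tsum_of_nonneg (fun n => pow_nonneg (hx01 m) n)
            (summable_geometric_of_lt_one (hx01 m) (hx11 m))).symm
      _ = ENNReal.ofReal ((e m)⁻¹) := by
          rw [tsum_geometric_of_lt_one (hx01 m) (hx11 m), _root_.sub_sub_cancel]
  have hgeo2 : ∀ m, ∑' n : ℕ, ((n : ℝ≥0∞) + 1) * (1 - T m) ^ n
      ≤ ENNReal.ofReal (((e m)⁻¹) ^ 2) := by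
    intro m
    calc ∑' n : ℕ, ((n : ℝ≥0∞) + 1) * (1 - T m) ^ n
        ≤ ∑' n : ℕ, ENNReal.ofReal (((n : ℝ) + 1) * (1 - e m) ^ n) := by
          apply ENNReal.tsum_le_tsum
          intro n
          rw [ENNReal.ofReal_mul (by positivity)]
          apply mul_le_mul' _ (hpowle m n)
          rw [ENNReal.ofReal_add (by positivity) (by norm_num), ENNReal.ofReal_natCast,
            ENNReal.ofReal_one]
      _ = ENNReal.ofReal (∑' n : ℕ, ((n : ℝ) + 1) * (1 - e m) ^ n) :=
          (ENNReal.ofReal_tsum_of_nonneg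
            (fun n => mul_nonneg (by positivity) (pow_nonneg (hx01 m) n))
            (aux_geom2_summable (hx01 m) (hx11 m))).symm
      _ ≤ ENNReal.ofReal (((1 - (1 - e m))⁻¹) ^ 2) :=
          ENNReal.ofReal_le_ofReal (aux_geom2 (hx01 m) (hx11 m))
      _ = ENNReal.ofReal (((e m)⁻¹) ^ 2) := by rw [_root_.sub_sub_cancel]
  have hple : ∀ k, p k ≤ 1 := by
    intro k
    rw [hp_def]
    calc c⁻¹ * ((k + 1 : ℕ) : ℝ≥0∞) ^ (-(5/4 : ℝ)) = μ {ω | K 0 ω = k + 1} := (hlaw 0 k).symm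
      _ ≤ 1 := prob_le_one
  have hhalf : (2⁻¹ : ℝ≥0∞) = ENNReal.ofReal 2⁻¹ := by
    rw [ENNReal.ofReal_inv_of_pos (by norm_num)]
    norm_num
  -- the D sets (red records)
  set D : ℕ → Set Ω := fun i =>
    {ω | ∃ k, K i ω = k + 1 ∧ Y i ω = true ∧ ∀ j < i, K j ω ≤ k + 1} with hD_def
  have hDbound : ∀ i, μ (D i)
      ≤ ∑' k : ℕ, (2⁻¹ ^ (k+1) * p k) * (1 - T (k+1)) ^ i := by
    intro i
    have hsub : D i ⊆ ⋃ k : ℕ, ⋂ j ∈ Finset.range (i+1),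
        (fun ω => (K j ω, Y j ω)) ⁻¹'
          (if j = i then {q : ℕ × Bool | q.1 = k + 1 ∧ q.2 = true}
           else {q : ℕ × Bool | q.1 ≤ k + 1}) := by
      intro ω hω
      obtain ⟨k, hk1, hk2, hk3⟩ := hω
      refine Set.mem_iUnion.mpr ⟨k, ?_⟩
      refine Set.mem_iInter₂.mpr fun j hj => ?_
      by_cases hji : j = i
      · subst hji
        simp only [if_pos rfl, Set.mem_preimage, Set.mem_setOf_eq]
        exact ⟨hk1, hk2⟩
      · have hj' : j < i := by
          simp only [Finset.mem_range] at hj; omega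
        simp only [if_neg hji, Set.mem_preimage, Set.mem_setOf_eq]
        exact hk3 j hj'
    calc μ (D i) ≤ μ (⋃ k : ℕ, ⋂ j ∈ Finset.range (i+1),
        (fun ω => (K j ω, Y j ω)) ⁻¹'
          (if j = i then {q : ℕ × Bool | q.1 = k + 1 ∧ q.2 = true}
           else {q : ℕ × Bool | q.1 ≤ k + 1})) := measure_mono hsub
      _ ≤ ∑' k : ℕ, μ (⋂ j ∈ Finset.range (i+1),
          (fun ω => (K j ω, Y j ω)) ⁻¹'
            (if j = i then {q : ℕ × Bool | q.1 = k + 1 ∧ q.2 = true}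
             else {q : ℕ × Bool | q.1 ≤ k + 1})) := measure_iUnion_le _
      _ ≤ ∑' k : ℕ, (2⁻¹ ^ (k+1) * p k) * (1 - T (k+1)) ^ i := by
          apply ENNReal.tsum_le_tsum
          intro k
          rw [hprod, Finset.range_add_one, Finset.prod_insert Finset.notMem_range_self]
          apply le_of_eq
          congr 1
          · rw [if_pos rfl]
            have : ((fun ω => (K i ω, Y i ω)) ⁻¹'
                {q : ℕ × Bool | q.1 = k + 1 ∧ q.2 = true})
                = {ω | K i ω = k + 1 ∧ Y i ω = true} := rfl
            rw [this, hred i k, hlaw i k]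
          · rw [Finset.prod_congr rfl (fun j hj => ?_), Finset.prod_const, Finset.card_range]
            have hji : j ≠ i := by
              simp only [Finset.mem_range] at hj; omega
            rw [if_neg hji]
            have : ((fun ω => (K j ω, Y j ω)) ⁻¹' {q : ℕ × Bool | q.1 ≤ k + 1})
                = {ω | K j ω ≤ k + 1} := rfl
            rw [this, hFm]
  have hgD : Summable (fun k : ℕ => (2⁻¹ : ℝ) ^ (k+1) * (a⁻¹ * ((k + 2 : ℕ) : ℝ))) := by
    have hs1 : Summable (fun k : ℕ => (k : ℝ) * (2⁻¹:ℝ) ^ k) := by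
      have := summable_pow_mul_geometric_of_norm_lt_one (R := ℝ) 1 (r := 2⁻¹) (by
        rw [Real.norm_eq_abs, abs_of_pos] <;> norm_num)
      simpa using this
    have hs2 : Summable (fun k : ℕ => (2⁻¹:ℝ) ^ k) :=
      summable_geometric_of_lt_one (by norm_num) (by norm_num)
    apply Summable.congr (((hs1.add (hs2.mul_left 2)).mul_left (2⁻¹ * a⁻¹)))
    intro k
    push_cast
    ring
  have hDsum : ∑' i, μ (D i) ≠ ∞ := by
    have h1 : ∑' i, μ (D i) ≤ ∑' k : ℕ, ∑' i : ℕ, (2⁻¹ ^ (k+1) * p k) * (1 - T (k+1)) ^ i := by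
      rw [← ENNReal.tsum_comm]
      exact ENNReal.tsum_le_tsum hDbound
    apply ne_top_of_le_ne_top _ h1
    have h2 : ∀ k : ℕ, ∑' i : ℕ, (2⁻¹ ^ (k+1) * p k) * (1 - T (k+1)) ^ i
        ≤ ENNReal.ofReal ((2⁻¹:ℝ) ^ (k+1) * (a⁻¹ * ((k + 2 : ℕ) : ℝ))) := by
      intro k
      rw [ENNReal.tsum_mul_left]
      calc (2⁻¹ ^ (k+1) * p k) * ∑' i : ℕ, (1 - T (k+1)) ^ i
          ≤ (2⁻¹ ^ (k+1) * 1) * ENNReal.ofReal ((e (k+1))⁻¹) :=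
            mul_le_mul' (mul_le_mul' (le_refl _) (hple k)) (hgeo (k+1))
        _ = 2⁻¹ ^ (k+1) * ENNReal.ofReal ((e (k+1))⁻¹) := by rw [mul_one]
        _ ≤ 2⁻¹ ^ (k+1) * ENNReal.ofReal (a⁻¹ * ((k + 2 : ℕ) : ℝ)) := by
            apply mul_le_mul' (le_refl _)
            apply ENNReal.ofReal_le_ofReal
            have := aux_einv a (((k+1) + 1 : ℕ) : ℝ) ha0 (by exact_mod_cast Nat.le_add_left 1 (k+1))
            exact this
        _ = ENNReal.ofReal ((2⁻¹:ℝ) ^ (k+1) * (a⁻¹ * ((k + 2 : ℕ) : ℝ))) := by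
            have h3 : ENNReal.ofReal ((2⁻¹:ℝ)^(k+1) * (a⁻¹ * ((k+2:ℕ):ℝ)))
                = ENNReal.ofReal ((2⁻¹:ℝ)^(k+1)) * ENNReal.ofReal (a⁻¹ * ((k+2:ℕ):ℝ)) :=
              ENNReal.ofReal_mul (by positivity)
            rw [h3, ENNReal.ofReal_pow (by norm_num : (0:ℝ) ≤ 2⁻¹), ← hhalf]
    apply ne_top_of_le_ne_top _ (ENNReal.tsum_le_tsum h2)
    rw [← ENNReal.ofReal_tsum_of_nonneg (fun k => by positivity) hgD]
    exact ENNReal.ofReal_ne_top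
  -- the C sets (tied records)
  set C : ℕ → Set Ω := fun i =>
    {ω | ∃ k, ∃ j < i, K i ω = k + 1 ∧ K j ω = k + 1 ∧ ∀ j' < i, K j' ω ≤ k + 1} with hC_def
  have hCbound : ∀ m : ℕ, μ (C (m+1))
      ≤ ∑' k : ℕ, ((m : ℝ≥0∞) + 1) * (p k * p k * (1 - T (k+1)) ^ m) := by
    intro m
    have hsub : C (m+1) ⊆ ⋃ k : ℕ, ⋃ j ∈ Finset.range (m+1), ⋂ j' ∈ Finset.range (m+2),
        (fun ω => (K j' ω, Y j' ω)) ⁻¹'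
          (if j' = m+1 ∨ j' = j then {q : ℕ × Bool | q.1 = k + 1}
           else {q : ℕ × Bool | q.1 ≤ k + 1}) := by
      intro ω hω
      obtain ⟨k, j, hj, hk1, hk2, hk3⟩ := hω
      refine Set.mem_iUnion.mpr ⟨k, ?_⟩
      refine Set.mem_iUnion₂.mpr ⟨j, Finset.mem_range.mpr hj, ?_⟩
      refine Set.mem_iInter₂.mpr fun j' hj' => ?_
      by_cases hcase : j' = m+1 ∨ j' = j
      · rw [if_pos hcase]
        rcases hcase with h | h
        · subst h; exact hk1
        · subst h; exact hk2
      · rw [if_neg hcase]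
        push_neg at hcase
        have hlt : j' < m+1 := by
          simp only [Finset.mem_range] at hj'; omega
        exact hk3 j' hlt
    have hpiece : ∀ k : ℕ, ∀ j ∈ Finset.range (m+1),
        μ (⋂ j' ∈ Finset.range (m+2), (fun ω => (K j' ω, Y j' ω)) ⁻¹'
          (if j' = m+1 ∨ j' = j then {q : ℕ × Bool | q.1 = k + 1}
           else {q : ℕ × Bool | q.1 ≤ k + 1}))
          = p k * (p k * (1 - T (k+1)) ^ m) := by
      intro k j hj
      rw [hprod,
        show Finset.range (m+2) = insert (m+1) (Finset.range (m+1)) from Finset.range_add_one,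
        Finset.prod_insert Finset.notMem_range_self]
      congr 1
      · rw [if_pos (Or.inl rfl)]
        exact hlaw (m+1) k
      · rw [← Finset.mul_prod_erase _ _ hj]
        congr 1
        · rw [if_pos (Or.inr rfl)]
          exact hlaw j k
        · rw [Finset.prod_congr rfl (fun j' hj' => ?_), Finset.prod_const,
            Finset.card_erase_of_mem hj, Finset.card_range, Nat.add_sub_cancel]
          have hne : j' ≠ j := (Finset.mem_erase.mp hj').1
          have hmem : j' ∈ Finset.range (m+1) := (Finset.mem_erase.mp hj').2
          have hne2 : j' ≠ m+1 := by
            simp only [Finset.mem_range] at hmem; omega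
          rw [if_neg (by push_neg; exact ⟨hne2, hne⟩)]
          exact hFm j' (k+1)
    calc μ (C (m+1)) ≤ μ (⋃ k : ℕ, ⋃ j ∈ Finset.range (m+1), ⋂ j' ∈ Finset.range (m+2),
        (fun ω => (K j' ω, Y j' ω)) ⁻¹'
          (if j' = m+1 ∨ j' = j then {q : ℕ × Bool | q.1 = k + 1}
           else {q : ℕ × Bool | q.1 ≤ k + 1})) := measure_mono hsub
      _ ≤ ∑' k : ℕ, μ (⋃ j ∈ Finset.range (m+1), ⋂ j' ∈ Finset.range (m+2),
          (fun ω => (K j' ω, Y j' ω)) ⁻¹'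
            (if j' = m+1 ∨ j' = j then {q : ℕ × Bool | q.1 = k + 1}
             else {q : ℕ × Bool | q.1 ≤ k + 1})) := measure_iUnion_le _
      _ ≤ ∑' k : ℕ, ∑ j ∈ Finset.range (m+1), μ (⋂ j' ∈ Finset.range (m+2),
          (fun ω => (K j' ω, Y j' ω)) ⁻¹'
            (if j' = m+1 ∨ j' = j then {q : ℕ × Bool | q.1 = k + 1}
             else {q : ℕ × Bool | q.1 ≤ k + 1})) :=
          ENNReal.tsum_le_tsum fun k => measure_biUnion_finset_le _ _
      _ = ∑' k : ℕ, ((m : ℝ≥0∞) + 1) * (p k * p k * (1 - T (k+1)) ^ m) := by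
          apply tsum_congr
          intro k
          rw [Finset.sum_congr rfl (hpiece k), Finset.sum_const, Finset.card_range,
            nsmul_eq_mul]
          push_cast
          ring
  have hgCsum : Summable (fun k : ℕ =>
      ((k+1:ℕ):ℝ)^(-(5/4:ℝ)) * ((k+1:ℕ):ℝ)^(-(5/4:ℝ))
        * (a⁻¹^2 * (((k+1)+1:ℕ):ℝ)^((1/2:ℝ)))) := by
    have hbig : Summable (fun k : ℕ => a⁻¹^2 * (2 * ((k+1:ℕ):ℝ)^(-(2:ℝ)))) := by
      apply Summable.mul_left
      apply Summable.mul_left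
      have h := Real.summable_nat_rpow.mpr (by norm_num : (-2:ℝ) < -1)
      have := (summable_nat_add_iff 1).mpr h
      simpa using this
    apply Summable.of_nonneg_of_le _ _ hbig
    · intro k
      positivity
    · intro k
      have hx1 : (1:ℝ) ≤ ((k+1:ℕ):ℝ) := by exact_mod_cast Nat.le_add_left 1 k
      have hct := aux_C_term ((k+1:ℕ):ℝ) hx1
      have hcast : ((((k+1)+1:ℕ)):ℝ) = ((k+1:ℕ):ℝ) + 1 := by push_cast; ring
      rw [hcast]
      calc ((k+1:ℕ):ℝ)^(-(5/4:ℝ)) * ((k+1:ℕ):ℝ)^(-(5/4:ℝ))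
            * (a⁻¹^2 * (((k+1:ℕ):ℝ) + 1)^((1/2:ℝ)))
          = a⁻¹^2 * (((k+1:ℕ):ℝ)^(-(5/4:ℝ)) * ((k+1:ℕ):ℝ)^(-(5/4:ℝ))
            * (((k+1:ℕ):ℝ) + 1)^((1/2:ℝ))) := by ring
        _ ≤ a⁻¹^2 * (2 * ((k+1:ℕ):ℝ)^(-(2:ℝ))) := by
            apply mul_le_mul_of_nonneg_left hct (by positivity)
  have hCsum : ∑' i, μ (C i) ≠ ∞ := by
    have hC0 : μ (C 0) = 0 := by
      have hemp : C 0 = ∅ := by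
        ext ω
        simp only [hC_def, Set.mem_setOf_eq, Set.mem_empty_iff_false, iff_false]
        rintro ⟨k, j, hj, -⟩
        omega
      rw [hemp, measure_empty]
    rw [tsum_eq_zero_add' ENNReal.summable, hC0, zero_add]
    have h1 : ∑' m : ℕ, μ (C (m+1))
        ≤ ∑' k : ℕ, ∑' m : ℕ, ((m : ℝ≥0∞) + 1) * (p k * p k * (1 - T (k+1)) ^ m) := by
      rw [← ENNReal.tsum_comm]
      exact ENNReal.tsum_le_tsum hCbound
    apply ne_top_of_le_ne_top _ h1
    have h2 : ∀ k : ℕ, ∑' m : ℕ, ((m : ℝ≥0∞) + 1) * (p k * p k * (1 - T (k+1)) ^ m)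
        ≤ ENNReal.ofReal (((k+1:ℕ):ℝ)^(-(5/4:ℝ)) * ((k+1:ℕ):ℝ)^(-(5/4:ℝ))
            * (a⁻¹^2 * (((k+1)+1:ℕ):ℝ)^((1/2:ℝ)))) := by
      intro k
      have hx1 : (1:ℝ) ≤ ((((k+1)+1:ℕ)):ℝ) := by exact_mod_cast Nat.le_add_left 1 (k+1)
      have hre : ∑' m : ℕ, ((m : ℝ≥0∞) + 1) * (p k * p k * (1 - T (k+1)) ^ m)
          = (p k * p k) * ∑' m : ℕ, ((m : ℝ≥0∞) + 1) * (1 - T (k+1)) ^ m := by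
        rw [← ENNReal.tsum_mul_left]
        apply tsum_congr
        intro m
        ring
      rw [hre]
      have hesq : ((e (k+1))⁻¹)^2 = a⁻¹^2 * (((k+1)+1:ℕ):ℝ)^((1/2:ℝ)) :=
        aux_einvsq a _ ha0 hx1
      have hpk : p k ≤ ENNReal.ofReal (((k+1:ℕ):ℝ)^(-(5/4:ℝ))) := by
        rw [hpreal k]
        apply ENNReal.ofReal_le_ofReal
        have h01 : ct⁻¹ ≤ 1 := by
          rw [inv_le_one_iff₀]; right; exact hct1
        calc ct⁻¹ * ((k+1:ℕ):ℝ)^(-(5/4:ℝ)) ≤ 1 * ((k+1:ℕ):ℝ)^(-(5/4:ℝ)) := by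
              apply mul_le_mul_of_nonneg_right h01 (by positivity)
          _ = ((k+1:ℕ):ℝ)^(-(5/4:ℝ)) := one_mul _
      calc (p k * p k) * ∑' m : ℕ, ((m : ℝ≥0∞) + 1) * (1 - T (k+1)) ^ m
          ≤ (ENNReal.ofReal (((k+1:ℕ):ℝ)^(-(5/4:ℝ)))
              * ENNReal.ofReal (((k+1:ℕ):ℝ)^(-(5/4:ℝ))))
              * ENNReal.ofReal (((e (k+1))⁻¹)^2) :=
            mul_le_mul' (mul_le_mul' hpk hpk) (hgeo2 (k+1))
        _ = ENNReal.ofReal (((k+1:ℕ):ℝ)^(-(5/4:ℝ)) * ((k+1:ℕ):ℝ)^(-(5/4:ℝ))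
              * (a⁻¹^2 * (((k+1)+1:ℕ):ℝ)^((1/2:ℝ)))) := by
            rw [hesq, ← ENNReal.ofReal_mul (by positivity), ← ENNReal.ofReal_mul (by positivity)]
    apply ne_top_of_le_ne_top _ (ENNReal.tsum_le_tsum h2)
    rw [← ENNReal.ofReal_tsum_of_nonneg (fun k => by positivity) hgCsum]
    exact ENNReal.ofReal_ne_top
  -- Borel–Cantelli and conclusion
  have hBae := MeasureTheory.ae_eventually_notMem hBsum
  have hCae := MeasureTheory.ae_eventually_notMem hCsum
  have hDae := MeasureTheory.ae_eventually_notMem hDsum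
  have hposae : ∀ᵐ ω ∂μ, ∀ i, 1 ≤ K i ω := ae_all_iff.mpr hpos
  filter_upwards [hBae, hCae, hDae, hposae] with ω hB' hC' hD' hpos'
  rw [Filter.eventually_atTop] at hB' hC' hD'
  obtain ⟨iB, hiB⟩ := hB'
  obtain ⟨iC, hiC⟩ := hC'
  obtain ⟨iD, hiD⟩ := hD'
  refine ⟨max iB (max iC iD), ?_, ?_⟩
  · intro i hi
    have h := hiB i (le_trans (le_max_left _ _) hi)
    by_contra hcon
    push_neg at hcon
    exact h hcon
  · intro i hi hrec
    have hC'' := hiC i (le_trans (le_trans (le_max_left _ _) (le_max_right _ _)) hi)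
    have hD'' := hiD i (le_trans (le_trans (le_max_right _ _) (le_max_right _ _)) hi)
    have hKi : 1 ≤ K i ω := hpos' i
    obtain ⟨k, hk⟩ : ∃ k, K i ω = k + 1 := ⟨K i ω - 1, by omega⟩
    constructor
    · intro j hj
      by_contra hnot
      push_neg at hnot
      have heq : K j ω = K i ω := le_antisymm (hrec j hj) hnot
      refine hC'' ?_
      show ∃ k, ∃ j < i, K i ω = k + 1 ∧ K j ω = k + 1 ∧ ∀ j' < i, K j' ω ≤ k + 1
      exact ⟨k, j, hj, hk, heq.trans hk, fun j' hj' => by rw [← hk]; exact hrec j' hj'⟩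
    · by_contra hY
      have hYt : Y i ω = true := by
        cases hY' : Y i ω
        · exact absurd hY' hY
        · rfl
      refine hD'' ?_
      show ∃ k, K i ω = k + 1 ∧ Y i ω = true ∧ ∀ j < i, K j ω ≤ k + 1
      exact ⟨k, hk, hYt, fun j hj => by rw [← hk]; exact hrec j hj⟩
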